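/- Let κ be a regular infinite cardinal and let π represent a cardinality-preserving automorphism of P(κ⁺)/I_κ, with ρ an inverse selector for π (i.e. π(ρ(A)) ∼_κ A for all A ⊆ κ⁺). Let C be the set of closure points of π, and let S = {α ∈ C : ¬(π(α̂) ∼_κ α̂)}, where α̂ = {γ : γ < α}. Then there exist S₀ and S₁ with S = S₀ ∪ S₁ such that for each i ∈ {0,1}, every α ∈ S_i is a limit ordinal and there is a ladder system ⟨L_α : α ∈ S_i⟩ on S_i which satisfies 2-uniformization. -/

import Mathlib

open Cardinal Set

universe u

/-- `A ∼_κ B`: the symmetric difference of `A` and `B` has cardinality `< κ`. -/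
def Sim {X : Type u} (κ : Cardinal.{u}) (A B : Set X) : Prop :=
  #(↥(symmDiff A B)) < κ

/-- `π : P(X) → P(X)` represents an automorphism of `P(X)/I_κ`. -/
def IsAutoRep {X : Type u} (κ : Cardinal.{u}) (π : Set X → Set X) : Prop :=
  (∀ A B : Set X, Sim κ A B → Sim κ (π A) (π B)) ∧
  (∀ A B : Set X, Sim κ (π (A ∪ B)) (π A ∪ π B)) ∧
  (∀ A : Set X, Sim κ (π Aᶜ) (π A)ᶜ) ∧
  (∀ B : Set X, ∃ A : Set X, Sim κ (π A) B) ∧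
  (∀ A B : Set X, Sim κ (π A) (π B) → Sim κ A B)

/-- `π` is trivial on `Z`: some `f : X → Z` has `π(A) ∼_κ f⁻¹(A)` for all `A ⊆ Z`. -/
def TrivialOn {X : Type u} (κ : Cardinal.{u}) (π : Set X → Set X) (Z : Set X) : Prop :=
  ∃ f : X → X, (∀ x, f x ∈ Z) ∧ ∀ A : Set X, A ⊆ Z → Sim κ (π A) (f ⁻¹' A)

/-- `π` is trivial: some `f : X → X` has `π(A) ∼_κ f⁻¹(A)` for all `A ⊆ X`. -/
def IsTrivial {X : Type u} (κ : Cardinal.{u}) (π : Set X → Set X) : Prop :=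
  ∃ f : X → X, ∀ A : Set X, Sim κ (π A) (f ⁻¹' A)

/-- `π` is cardinality-preserving. -/
def CardPres {X : Type u} (κ : Cardinal.{u}) (π : Set X → Set X) : Prop :=
  ∀ A : Set X, ∃ B : Set X, #(↥B) = #(↥A) ∧ Sim κ (π A) B

/-- The cardinal `κ⁺`, viewed as the canonical well-ordered type of ordinals below
`(κ⁺).ord`. -/
abbrev SuccType (κ : Cardinal.{u}) : Type u := ((Order.succ κ).ord).ToType

/-- The least cardinality of a cofinal subset of `{β | β < α}` (for `α` a limit, this is
the cofinality of `α`). -/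
noncomputable def CofCard {T : Type u} [LinearOrder T] (α : T) : Cardinal.{u} :=
  sInf {c : Cardinal.{u} | ∃ S : Set T, S ⊆ Set.Iio α ∧
    (∀ β < α, ∃ γ ∈ S, β ≤ γ) ∧ #(↥S) = c}

/-- `Lad` is a ladder on `α`: a cofinal subset of `{β | β < α}` whose order type is the
cofinality of `α` (witnessed by a strictly increasing enumeration indexed by a well order
of type `cf(α)`). -/
def IsLadderOn {T : Type u} [LinearOrder T] (Lad : Set T) (α : T) : Prop :=
  Lad ⊆ Set.Iio α ∧ (∀ β < α, ∃ γ ∈ Lad, β ≤ γ) ∧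
  ∃ e : ((CofCard α).ord).ToType → T, StrictMono e ∧ Set.range e = Lad

/-- The ladder system `⟨Lad α : α ∈ S⟩` satisfies 2-uniformization (with error sets of
cardinality `< κ`). -/
def TwoUnif {T : Type u} [LinearOrder T] (κ : Cardinal.{u}) (S : Set T)
    (Lad : T → Set T) : Prop :=
  ∀ f : T → T → Bool, ∃ F : T → Bool, ∀ α ∈ S,
    #(↥{β ∈ Lad α | F β ≠ f α β}) < κ


set_option linter.unusedSectionVars false
set_option linter.unusedVariables false

namespace Stmt19Aux

variable {X : Type u} {κ : Cardinal.{u}}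


variable {X : Type u} {κ : Cardinal.{u}}

lemma sm_mono {A B : Set X} (h : A ⊆ B) (hB : #(↥B) < κ) : #(↥A) < κ :=
  (Cardinal.mk_le_mk_of_subset h).trans_lt hB

lemma sm_union (hκ : ℵ₀ ≤ κ) {A B : Set X} (hA : #(↥A) < κ) (hB : #(↥B) < κ) :
    #(↥(A ∪ B)) < κ :=
  (Cardinal.mk_union_le A B).trans_lt (Cardinal.add_lt_of_lt hκ hA hB)

lemma sm_empty (hκ : ℵ₀ ≤ κ) : #(↥(∅ : Set X)) < κ := by
  rw [Cardinal.mk_emptyCollection]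
  exact aleph0_pos.trans_le hκ

lemma sim_refl (hκ : ℵ₀ ≤ κ) (A : Set X) : Sim κ A A := by
  rw [Sim, symmDiff_self]
  exact sm_empty hκ

lemma sim_symm {A B : Set X} (h : Sim κ A B) : Sim κ B A := by
  rwa [Sim, symmDiff_comm]

lemma sim_trans (hκ : ℵ₀ ≤ κ) {A B C : Set X} (h1 : Sim κ A B) (h2 : Sim κ B C) :
    Sim κ A C :=
  sm_mono (symmDiff_triangle A B C) (sm_union hκ h1 h2)

lemma sim_of_sm (hκ : ℵ₀ ≤ κ) {A B : Set X} (hA : #(↥A) < κ) (hB : #(↥B) < κ) :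
    Sim κ A B :=
  sm_mono symmDiff_le_sup (sm_union hκ hA hB)

lemma sm_of_sim (hκ : ℵ₀ ≤ κ) {A B : Set X} (h : Sim κ A B) (hA : #(↥A) < κ) :
    #(↥B) < κ := by
  have hsub : B ⊆ A ∪ (symmDiff A B) := by
    intro x hx
    simp only [Set.mem_union, Set.mem_symmDiff]
    by_cases hxA : x ∈ A
    · exact Or.inl hxA
    · exact Or.inr (Or.inr ⟨hx, hxA⟩)
  exact sm_mono hsub (sm_union hκ hA h)

lemma sim_iff_diff (hκ : ℵ₀ ≤ κ) {A B : Set X} :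
    Sim κ A B ↔ (#(↥(A \ B)) < κ ∧ #(↥(B \ A)) < κ) := by
  constructor
  · intro h
    constructor
    · refine sm_mono ?_ h
      rw [Set.symmDiff_def]; exact Set.subset_union_left
    · refine sm_mono ?_ h
      rw [Set.symmDiff_def]; exact Set.subset_union_right
  · rintro ⟨h1, h2⟩
    rw [Sim, Set.symmDiff_def]
    exact sm_union hκ h1 h2

lemma sim_union_congr (hκ : ℵ₀ ≤ κ) {A A' B B' : Set X} (hA : Sim κ A A') (hB : Sim κ B B') :
    Sim κ (A ∪ B) (A' ∪ B') := by
  refine sm_mono ?_ (sm_union hκ hA hB)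
  intro x hx
  simp only [Set.mem_symmDiff, Set.mem_union] at *
  tauto

lemma sim_inter_congr (hκ : ℵ₀ ≤ κ) {A A' B B' : Set X} (hA : Sim κ A A') (hB : Sim κ B B') :
    Sim κ (A ∩ B) (A' ∩ B') := by
  refine sm_mono ?_ (sm_union hκ hA hB)
  intro x hx
  simp only [Set.mem_symmDiff, Set.mem_union, Set.mem_inter_iff] at *
  tauto

lemma sim_compl_congr {A B : Set X} (h : Sim κ A B) : Sim κ Aᶜ Bᶜ := by
  refine sm_mono ?_ h
  intro x hx
  simp only [Set.mem_symmDiff, Set.mem_compl_iff] at *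
  tauto

lemma sim_diff_congr (hκ : ℵ₀ ≤ κ) {A A' B B' : Set X} (hA : Sim κ A A') (hB : Sim κ B B') :
    Sim κ (A \ B) (A' \ B') := by
  refine sm_mono ?_ (sm_union hκ hA hB)
  intro x hx
  simp only [Set.mem_symmDiff, Set.mem_union, Set.mem_diff] at *
  tauto


/-- everything needed about a pseudo-homomorphism `σ` with pseudo-inverse `τ`. -/
structure SimPair (κ : Cardinal.{u}) (σ τ : Set X → Set X) : Prop where
  congr : ∀ A B : Set X, Sim κ A B → Sim κ (σ A) (σ B)
  union : ∀ A B : Set X, Sim κ (σ (A ∪ B)) (σ A ∪ σ B)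
  inter : ∀ A B : Set X, Sim κ (σ (A ∩ B)) (σ A ∩ σ B)
  sm : ∀ A : Set X, #(↥A) < κ → #(↥(σ A)) < κ
  reflect_diff : ∀ A B : Set X, #(↥(σ A \ σ B)) < κ → #(↥(A \ B)) < κ
  mono_sm : ∀ A B : Set X, #(↥(A \ B)) < κ → #(↥(σ A \ σ B)) < κ
  inv : ∀ A : Set X, Sim κ (σ (τ A)) A

section PiRho
variable (hκ : ℵ₀ ≤ κ) {π ρ : Set X → Set X}
  (hπ : IsAutoRep κ π) (hcp : CardPres κ π) (hρ : ∀ A : Set X, Sim κ (π (ρ A)) A)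

include hκ hπ

include hcp in
lemma pi_empty : Sim κ (π (∅ : Set X)) ∅ := by
  obtain ⟨B, hB0, hsim⟩ := hcp (∅ : Set X)
  rw [Cardinal.mk_emptyCollection] at hB0
  have hBe : B = ∅ := Cardinal.mk_emptyCollection_iff.mp hB0
  rwa [hBe] at hsim

include hcp in
lemma pi_sm {A : Set X} (hA : #(↥A) < κ) : #(↥(π A)) < κ := by
  have h1 : Sim κ A ∅ := sim_of_sm hκ hA (sm_empty hκ)
  have h2 : Sim κ (π A) (π ∅) := hπ.1 _ _ h1
  have h3 : Sim κ (π A) (∅ : Set X) := sim_trans hκ h2 (pi_empty hκ hπ hcp)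
  exact sm_of_sim hκ (sim_symm h3) (sm_empty hκ)

lemma pi_inter (A B : Set X) : Sim κ (π (A ∩ B)) (π A ∩ π B) := by
  have h0 : A ∩ B = (Aᶜ ∪ Bᶜ)ᶜ := by rw [Set.compl_union, compl_compl, compl_compl]
  have h1 : Sim κ (π (A ∩ B)) (π (Aᶜ ∪ Bᶜ))ᶜ := by rw [h0]; exact hπ.2.2.1 _
  have h2 : Sim κ (π (Aᶜ ∪ Bᶜ))ᶜ (π Aᶜ ∪ π Bᶜ)ᶜ := sim_compl_congr (hπ.2.1 _ _)
  have h3 : Sim κ (π Aᶜ ∪ π Bᶜ)ᶜ ((π A)ᶜ ∪ (π B)ᶜ)ᶜ :=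
    sim_compl_congr (sim_union_congr hκ (hπ.2.2.1 A) (hπ.2.2.1 B))
  have h4 : ((π A)ᶜ ∪ (π B)ᶜ)ᶜ = π A ∩ π B := by
    rw [Set.compl_union, compl_compl, compl_compl]
  rw [← h4]
  exact sim_trans hκ h1 (sim_trans hκ h2 h3)

lemma pi_diff (A B : Set X) : Sim κ (π (A \ B)) (π A \ π B) := by
  have h0 : A \ B = A ∩ Bᶜ := Set.diff_eq A B
  have h1 : Sim κ (π (A \ B)) (π A ∩ π Bᶜ) := by rw [h0]; exact pi_inter hκ hπ A Bᶜ
  have h2 : Sim κ (π A ∩ π Bᶜ) (π A ∩ (π B)ᶜ) :=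
    sim_inter_congr hκ (sim_refl hκ _) (hπ.2.2.1 B)
  rw [Set.diff_eq (π A) (π B)]
  exact sim_trans hκ h1 h2

include hcp in
lemma pi_mono_sm {A B : Set X} (h : #(↥(A \ B)) < κ) : #(↥(π A \ π B)) < κ := by
  have h1 : Sim κ (π (A \ B)) (π A \ π B) := pi_diff hκ hπ A B
  exact sm_of_sim hκ h1 (pi_sm hκ hπ hcp h)

include hcp in
lemma pi_reflect_sm {A : Set X} (h : #(↥(π A)) < κ) : #(↥A) < κ := by
  have h1 : Sim κ (π A) (π ∅) :=
    sim_trans hκ (sim_of_sm hκ h (sm_empty hκ))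
      (sim_symm (pi_empty hκ hπ hcp))
  have h2 : Sim κ A (∅ : Set X) := hπ.2.2.2.2 _ _ h1
  exact sm_of_sim hκ (sim_symm h2) (sm_empty hκ)

include hcp in
lemma pi_reflect_diff {A B : Set X} (h : #(↥(π A \ π B)) < κ) : #(↥(A \ B)) < κ := by
  have h1 : Sim κ (π (A \ B)) (π A \ π B) := pi_diff hκ hπ A B
  have h2 : #(↥(π (A \ B))) < κ := sm_of_sim hκ (sim_symm h1) h
  exact pi_reflect_sm hκ hπ hcp h2

include hρ in
lemma sim_iff_pi {A B : Set X} : Sim κ A B ↔ Sim κ (π A) (π B) :=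
  ⟨hπ.1 A B, hπ.2.2.2.2 A B⟩

include hρ in
lemma rho_congr {A B : Set X} (h : Sim κ A B) : Sim κ (ρ A) (ρ B) := by
  apply hπ.2.2.2.2
  exact sim_trans hκ (hρ A) (sim_trans hκ h (sim_symm (hρ B)))

include hρ hcp in
lemma rho_sm {A : Set X} (hA : #(↥A) < κ) : #(↥(ρ A)) < κ := by
  apply pi_reflect_sm hκ hπ hcp
  exact sm_of_sim hκ (sim_symm (hρ A)) hA

include hρ in
lemma rho_union (A B : Set X) : Sim κ (ρ (A ∪ B)) (ρ A ∪ ρ B) := by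
  apply hπ.2.2.2.2
  have h1 : Sim κ (π (ρ (A ∪ B))) (A ∪ B) := hρ _
  have h2 : Sim κ (π (ρ A ∪ ρ B)) (π (ρ A) ∪ π (ρ B)) := hπ.2.1 _ _
  have h3 : Sim κ (π (ρ A) ∪ π (ρ B)) (A ∪ B) := sim_union_congr hκ (hρ A) (hρ B)
  exact sim_trans hκ h1 (sim_symm (sim_trans hκ h2 h3))

include hρ in
lemma rho_inter (A B : Set X) : Sim κ (ρ (A ∩ B)) (ρ A ∩ ρ B) := by
  apply hπ.2.2.2.2
  have h1 : Sim κ (π (ρ (A ∩ B))) (A ∩ B) := hρ _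
  have h2 : Sim κ (π (ρ A ∩ ρ B)) (π (ρ A) ∩ π (ρ B)) := pi_inter hκ hπ _ _
  have h3 : Sim κ (π (ρ A) ∩ π (ρ B)) (A ∩ B) := sim_inter_congr hκ (hρ A) (hρ B)
  exact sim_trans hκ h1 (sim_symm (sim_trans hκ h2 h3))

include hρ hcp in
lemma rho_reflect_diff {A B : Set X} (h : #(↥(ρ A \ ρ B)) < κ) : #(↥(A \ B)) < κ := by
  have h1 : #(↥(π (ρ A \ ρ B))) < κ := pi_sm hκ hπ hcp h
  have h2 : Sim κ (π (ρ A \ ρ B)) (π (ρ A) \ π (ρ B)) := pi_diff hκ hπ _ _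
  have h3 : Sim κ (π (ρ A) \ π (ρ B)) (A \ B) := sim_diff_congr hκ (hρ A) (hρ B)
  exact sm_of_sim hκ (sim_trans hκ h2 h3) h1

include hρ hcp in
lemma rho_mono_sm {A B : Set X} (h : #(↥(A \ B)) < κ) : #(↥(ρ A \ ρ B)) < κ := by
  apply pi_reflect_diff hκ hπ hcp
  have h3 : Sim κ (π (ρ A) \ π (ρ B)) (A \ B) := sim_diff_congr hκ (hρ A) (hρ B)
  exact sm_of_sim hκ (sim_symm h3) h

include hρ in
lemma rho_pi (A : Set X) : Sim κ (ρ (π A)) A := by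
  apply hπ.2.2.2.2
  exact hρ (π A)

include hρ hcp in
lemma pair_pi : SimPair κ π ρ where
  congr := hπ.1
  union := hπ.2.1
  inter := pi_inter hκ hπ
  sm := fun _ => pi_sm hκ hπ hcp
  reflect_diff := fun _ _ => pi_reflect_diff hκ hπ hcp
  mono_sm := fun _ _ => pi_mono_sm hκ hπ hcp
  inv := hρ

include hρ hcp in
lemma pair_rho : SimPair κ ρ π where
  congr := fun _ _ => rho_congr hκ hπ hρ
  union := rho_union hκ hπ hρ
  inter := rho_inter hκ hπ hρ
  sm := fun _ => rho_sm hκ hπ hcp hρ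
  reflect_diff := fun _ _ => rho_reflect_diff hκ hπ hcp hρ
  mono_sm := fun _ _ => rho_mono_sm hκ hπ hcp hρ
  inv := rho_pi hκ hπ hρ


end PiRho

lemma exists_isLadderOn {T : Type u} [LinearOrder T] (α : T) (hlim : Order.IsSuccLimit α)
    (U : Set T) (hUsub : U ⊆ Set.Iio α) (hUcof : ∀ β < α, ∃ γ ∈ U, β ≤ γ) :
    ∃ L : Set T, IsLadderOn L α ∧ L ⊆ U := by
  classical
  have hmem : CofCard α ∈ {c : Cardinal.{u} | ∃ S : Set T, S ⊆ Set.Iio α ∧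
      (∀ β < α, ∃ γ ∈ S, β ≤ γ) ∧ #(↥S) = c} :=
    csInf_mem ⟨#(↥(Set.Iio α)), Set.Iio α, subset_rfl, fun β h => ⟨β, h, le_rfl⟩, rfl⟩
  obtain ⟨W₀, hWsub, hWcof, hWcard⟩ := hmem
  -- subsets of `Iio α` of cardinality `< CofCard α` are bounded
  have hbound : ∀ Y : Set T, Y ⊆ Set.Iio α → #(↥Y) < CofCard α →
      ∃ β, β < α ∧ ∀ y ∈ Y, y < β := by
    intro Y hYsub hYcard
    by_contra hcon
    push_neg at hcon
    have hYcof : ∀ β < α, ∃ γ ∈ Y, β ≤ γ := by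
      intro β hβ
      obtain ⟨y, hy, hy2⟩ := hcon β hβ
      exact ⟨y, hy, hy2⟩
    have : CofCard α ≤ #(↥Y) := csInf_le' ⟨Y, hYsub, hYcof, rfl⟩
    exact absurd hYcard (not_lt.mpr this)
  -- an enumeration of W₀ by the canonical type of size CofCard α
  have hcardeq : #((CofCard α).ord.ToType) = #(↥W₀) := by
    rw [Cardinal.mk_ord_toType]; exact hWcard.symm
  obtain ⟨g⟩ : Nonempty ((CofCard α).ord.ToType ≃ ↥W₀) := Cardinal.eq.mp hcardeq
  -- the recursion step
  have Hstep : ∀ (i : (CofCard α).ord.ToType) (p : ∀ j, j < i → T),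
      ∃ γ : T, γ ∈ U ∧ (∀ j (hj : j < i), p j hj < α → p j hj < γ) ∧ (g i : T) ≤ γ := by
    intro i p
    set Y : Set T := {t | (∃ j hj, p j hj = t) ∧ t < α} with hY
    have hYsub : Y ⊆ Set.Iio α := fun t ht => ht.2
    have hYcard : #(↥Y) < CofCard α := by
      have h1 : Y ⊆ Set.range (fun j : ↥(Set.Iio i) => p j.1 j.2) := by
        rintro t ⟨⟨j, hj, rfl⟩, -⟩
        exact ⟨⟨j, hj⟩, rfl⟩
      calc #(↥Y) ≤ #(↥(Set.range (fun j : ↥(Set.Iio i) => p j.1 j.2))) :=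
            Cardinal.mk_le_mk_of_subset h1
        _ ≤ #(↥(Set.Iio i)) := Cardinal.mk_range_le
        _ < CofCard α := Cardinal.mk_Iio_ord_toType i
    obtain ⟨β, hβα, hβ⟩ := hbound Y hYsub hYcard
    have hgα : (g i : T) < α := hWsub (g i).2
    have hmax : max β (g i : T) < α := max_lt hβα hgα
    obtain ⟨δ, hδ⟩ := hlim.2.mid hmax
    rw [Set.mem_Ioo] at hδ
    obtain ⟨hδ1, hδ2⟩ := hδ
    obtain ⟨γ, hγU, hγδ⟩ := hUcof _ hδ2
    have hδγ : δ ≤ γ := hγδ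
    refine ⟨γ, hγU, ?_, ?_⟩
    · intro j hj hpj
      have : p j hj ∈ Y := ⟨⟨j, hj, rfl⟩, hpj⟩
      exact lt_of_lt_of_le ((hβ _ this).trans_le ((le_max_left _ _).trans hδ1.le)) hδγ
    · exact ((le_max_right β (g i : T)).trans hδ1.le).trans hδγ
  -- build the enumeration by well-founded recursion
  let wf : WellFounded ((· < ·) : (CofCard α).ord.ToType → (CofCard α).ord.ToType → Prop) :=
    (IsWellFounded.wf : WellFounded ((· < ·) : (CofCard α).ord.ToType → (CofCard α).ord.ToType → Prop))
  let e : (CofCard α).ord.ToType → T :=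
    WellFounded.fix wf (fun i rec => (Hstep i rec).choose)
  have heq : ∀ i, e i = (Hstep i (fun j _ => e j)).choose := fun i =>
    WellFounded.fix_eq wf (fun i rec => (Hstep i rec).choose) i
  have hspec : ∀ i, e i ∈ U ∧ (∀ j (hj : j < i), e j < α → e j < e i) ∧ (g i : T) ≤ e i := by
    intro i
    have h := (Hstep i (fun j _ => e j)).choose_spec
    rw [← heq i] at h
    exact h
  have heU : ∀ i, e i ∈ U := fun i => (hspec i).1
  have heα : ∀ i, e i < α := fun i => hUsub (heU i)
  have hmono : StrictMono e := by
    intro a b hab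
    exact (hspec b).2.1 a hab (heα a)
  refine ⟨Set.range e, ⟨?_, ?_, e, hmono, rfl⟩, ?_⟩
  · rintro t ⟨i, rfl⟩; exact heα i
  · intro β hβ
    obtain ⟨γ₀, hγ₀W, hβγ₀⟩ := hWcof β hβ
    refine ⟨e (g.symm ⟨γ₀, hγ₀W⟩), ⟨g.symm ⟨γ₀, hγ₀W⟩, rfl⟩, ?_⟩
    have := (hspec (g.symm ⟨γ₀, hγ₀W⟩)).2.2
    rw [Equiv.apply_symm_apply] at this
    exact hβγ₀.trans this
  · rintro t ⟨i, rfl⟩; exact heU i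


set_option maxHeartbeats 1000000 in
lemma side_lemma {T : Type u} [LinearOrder T] [WellFoundedLT T]
    (hκ : ℵ₀ ≤ κ) (σ τ : Set T → Set T)
    (P : SimPair κ σ τ) (Q : SimPair κ τ σ) (S' : Set T)
    (hCσ : ∀ α ∈ S', ∀ β < α, #(↥(σ (Set.Iio β) \ Set.Iio α)) < κ)
    (hCτ : ∀ α ∈ S', ∀ β < α, #(↥(τ (Set.Iio β) \ Set.Iio α)) < κ)
    (hbig : ∀ α ∈ S', ¬ #(↥(τ (Set.Iio α) \ Set.Iio α)) < κ)
    (hlim : ∀ α ∈ S', Order.IsSuccLimit α) :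
    ∃ Lad : T → Set T, (∀ α ∈ S', IsLadderOn (Lad α) α) ∧ TwoUnif κ S' Lad := by
  classical
  -- the disjointified big sets
  set nxtS : T → Set T := fun α => {x | x ∈ S' ∧ α < x} with hnxtS
  set V' : T → Set T := fun α => (τ (Set.Iio α) \ Set.Iio α) ∩
    (if h : (nxtS α).Nonempty then
      Set.Iio ((IsWellFounded.wf : WellFounded ((· < ·) : T → T → Prop)).min (nxtS α) h)
     else Set.univ) with hV'
  have hV'sub : ∀ α, V' α ⊆ τ (Set.Iio α) \ Set.Iio α := fun α => Set.inter_subset_left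
  -- disjointness
  have hdisj : ∀ a ∈ S', ∀ b ∈ S', a ≠ b → ∀ x, x ∈ V' a → x ∈ V' b → False := by
    have key : ∀ a ∈ S', ∀ b ∈ S', a < b → ∀ x, x ∈ V' a → x ∈ V' b → False := by
      intro a ha b hb hab x hxa hxb
      have hne : (nxtS a).Nonempty := ⟨b, hb, hab⟩
      have hxlt : x < (IsWellFounded.wf : WellFounded ((· < ·) : T → T → Prop)).min (nxtS a) hne := by
        have := hxa.2
        rw [dif_pos hne] at this
        exact this
      have hminb : (IsWellFounded.wf : WellFounded ((· < ·) : T → T → Prop)).min (nxtS a) hne ≤ b :=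
        not_lt.mp (WellFounded.not_lt_min _ (nxtS a) (x := b) ⟨hb, hab⟩)
      have hxb' : x ∈ Set.Iio b := lt_of_lt_of_le hxlt hminb
      exact (hxb.1).2 hxb'
    intro a ha b hb hab x hxa hxb
    rcases lt_or_gt_of_ne hab with h | h
    · exact key a ha b hb h x hxa hxb
    · exact key b hb a ha h x hxb hxa
  -- bigness of the disjointified sets
  have hV'big : ∀ α ∈ S', ¬ #(↥(V' α)) < κ := by
    intro α hα hcon
    apply hbig α hα
    by_cases hne : (nxtS α).Nonempty
    · set m := (IsWellFounded.wf : WellFounded ((· < ·) : T → T → Prop)).min (nxtS α) hne with hm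
      have hmS : m ∈ S' ∧ α < m := WellFounded.min_mem _ _ hne
      have hsmall : #(↥(τ (Set.Iio α) \ Set.Iio m)) < κ := hCτ m hmS.1 α hmS.2
      have hsub : τ (Set.Iio α) \ Set.Iio α ⊆ V' α ∪ (τ (Set.Iio α) \ Set.Iio m) := by
        intro x hx
        by_cases hxm : x < m
        · left
          refine ⟨hx, ?_⟩
          rw [dif_pos hne]
          exact hxm
        · right
          exact ⟨hx.1, hxm⟩
      exact sm_mono hsub (sm_union hκ hcon hsmall)
    · have : V' α = τ (Set.Iio α) \ Set.Iio α := by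
        rw [hV']
        simp only [dif_neg hne, Set.inter_univ]
      rwa [this] at hcon
  -- cofinality of σ (V' α) ∩ Iio α
  have hUcof : ∀ α ∈ S', ∀ β < α, ∃ γ ∈ σ (V' α) ∩ Set.Iio α, β ≤ γ := by
    intro α hα β hβ
    by_contra hcon
    push_neg at hcon
    apply hV'big α hα
    set Z := σ (V' α) with hZ
    have hZdec : Z = (Z ∩ Set.Iio β) ∪ (Z \ Set.Iio α) := by
      apply Set.Subset.antisymm
      · intro z hz
        by_cases hzα : z < α
        · left
          exact ⟨hz, not_le.mp (fun hle => absurd (hcon z ⟨hz, hzα⟩) (not_lt.mpr hle))⟩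
        · right; exact ⟨hz, hzα⟩
      · intro z hz
        rcases hz with h | h
        · exact h.1
        · exact h.1
    have hτZ : Sim κ (τ Z) (V' α) := Q.inv (V' α)
    have hτdec : Sim κ (τ Z) (τ (Z ∩ Set.Iio β) ∪ τ (Z \ Set.Iio α)) := by
      conv_lhs => rw [hZdec]
      exact Q.union _ _
    have hsmall1 : #(↥(τ (Z ∩ Set.Iio β) \ Set.Iio α)) < κ := by
      have h1 : #(↥(τ (Z ∩ Set.Iio β) \ τ (Set.Iio β))) < κ := by
        apply Q.mono_sm
        have : (Z ∩ Set.Iio β) \ Set.Iio β = ∅ := by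
          ext x; simp only [Set.mem_diff, Set.mem_inter_iff, Set.mem_empty_iff_false, iff_false]
          tauto
        rw [this]; exact sm_empty hκ
      have h2 : #(↥(τ (Set.Iio β) \ Set.Iio α)) < κ := hCτ α hα β hβ
      refine sm_mono ?_ (sm_union hκ h1 h2)
      intro x hx
      simp only [Set.mem_union, Set.mem_diff] at *
      tauto
    have hsmall2 : #(↥(τ (Z \ Set.Iio α) ∩ τ (Set.Iio α))) < κ := by
      have h1 : Sim κ (τ ((Z \ Set.Iio α) ∩ Set.Iio α)) (τ (Z \ Set.Iio α) ∩ τ (Set.Iio α)) :=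
        Q.inter _ _
      have h2 : (Z \ Set.Iio α) ∩ Set.Iio α = ∅ := by
        ext x; simp only [Set.mem_inter_iff, Set.mem_diff, Set.mem_empty_iff_false, iff_false]
        tauto
      rw [h2] at h1
      exact sm_of_sim hκ h1 (Q.sm _ (sm_empty hκ))
    have hfinal : V' α ⊆ (symmDiff (τ Z) (V' α)) ∪
        (symmDiff (τ Z) (τ (Z ∩ Set.Iio β) ∪ τ (Z \ Set.Iio α))) ∪
        (τ (Z ∩ Set.Iio β) \ Set.Iio α) ∪
        (τ (Z \ Set.Iio α) ∩ τ (Set.Iio α)) := by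
      intro x hx
      have hxτ : x ∈ τ (Set.Iio α) := (hV'sub α hx).1
      have hxα : x ∉ Set.Iio α := (hV'sub α hx).2
      by_cases h1 : x ∈ τ Z
      · by_cases h2 : x ∈ τ (Z ∩ Set.Iio β) ∪ τ (Z \ Set.Iio α)
        · rcases h2 with h2 | h2
          · exact Or.inl (Or.inr ⟨h2, hxα⟩)
          · exact Or.inr ⟨h2, hxτ⟩
        · refine Or.inl (Or.inl (Or.inr ?_))
          rw [Set.mem_symmDiff]
          exact Or.inl ⟨h1, h2⟩
      · refine Or.inl (Or.inl (Or.inl ?_))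
        rw [Set.mem_symmDiff]
        exact Or.inr ⟨hx, h1⟩
    exact sm_mono hfinal (sm_union hκ (sm_union hκ (sm_union hκ hτZ hτdec) hsmall1) hsmall2)
  -- choose ladders
  have hlad : ∀ α, α ∈ S' → ∃ L : Set T, IsLadderOn L α ∧ L ⊆ σ (V' α) ∩ Set.Iio α := by
    intro α hα
    exact exists_isLadderOn α (hlim α hα) (σ (V' α) ∩ Set.Iio α) Set.inter_subset_right
      (hUcof α hα)
  set Lad : T → Set T := fun α => if h : α ∈ S' then (hlad α h).choose else ∅ with hLad
  have hLadOn : ∀ α ∈ S', IsLadderOn (Lad α) α := by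
    intro α hα
    simp only [hLad]
    rw [dif_pos hα]
    exact (hlad α hα).choose_spec.1
  have hLadsub : ∀ α (hα : α ∈ S'), Lad α ⊆ σ (V' α) ∩ Set.Iio α := by
    intro α hα
    simp only [hLad]
    rw [dif_pos hα]
    exact (hlad α hα).choose_spec.2
  refine ⟨Lad, hLadOn, ?_⟩
  -- two-uniformization
  intro f
  set G : T → Set T := fun α => {β | β ∈ Lad α ∧ f α β = true} with hG
  set A : Set T := ⋃ α ∈ S', τ (G α) ∩ V' α with hA
  refine ⟨fun β => decide (β ∈ σ A), ?_⟩
  intro α hα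
  have hGsub : G α ⊆ σ (V' α) := fun β hb => (hLadsub α hα hb.1).1
  -- τ (G α) is almost contained in V' α
  have hc1 : #(↥(τ (G α) \ V' α)) < κ := by
    apply P.reflect_diff
    have h1 : Sim κ (σ (τ (G α))) (G α) := P.inv _
    have hsub : σ (τ (G α)) \ σ (V' α) ⊆ symmDiff (σ (τ (G α))) (G α) := by
      intro x hx
      rw [Set.mem_symmDiff]
      left
      exact ⟨hx.1, fun hxG => hx.2 (hGsub hxG)⟩
    exact sm_mono hsub h1
  -- A meets V' α exactly in τ (G α) ∩ V' α
  have hAV : A ∩ V' α = τ (G α) ∩ V' α := by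
    apply Set.Subset.antisymm
    · rintro x ⟨hxA, hxV⟩
      rw [hA] at hxA
      simp only [Set.mem_iUnion] at hxA
      obtain ⟨a, ha, hxa⟩ := hxA
      by_cases haα : a = α
      · subst haα; exact ⟨hxa.1, hxV⟩
      · exact absurd (hdisj a ha α hα haα x hxa.2 hxV) not_false
    · intro x hx
      refine ⟨?_, hx.2⟩
      rw [hA]
      simp only [Set.mem_iUnion]
      exact ⟨α, hα, hx⟩
  have hc2 : Sim κ (A ∩ V' α) (τ (G α)) := by
    rw [hAV]
    have hsub : symmDiff (τ (G α) ∩ V' α) (τ (G α)) ⊆ τ (G α) \ V' α := by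
      intro x hx
      rw [Set.mem_symmDiff] at hx
      rcases hx with h | h
      · exact absurd h.1.1 h.2
      · exact ⟨h.1, fun hxV => h.2 ⟨h.1, hxV⟩⟩
    exact sm_mono hsub hc1
  have hc3 : Sim κ (σ A ∩ σ (V' α)) (G α) := by
    have s1 : Sim κ (σ (A ∩ V' α)) (σ A ∩ σ (V' α)) := P.inter _ _
    have s2 : Sim κ (σ (A ∩ V' α)) (σ (τ (G α))) := P.congr _ _ hc2
    have s3 : Sim κ (σ (τ (G α))) (G α) := P.inv _
    exact sim_trans hκ (sim_symm s1) (sim_trans hκ s2 s3)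
  -- the error set is inside the symmetric difference
  have herr : {β ∈ Lad α | decide (β ∈ σ A) ≠ f α β} ⊆
      symmDiff (σ A ∩ σ (V' α)) (G α) := by
    intro β hβ
    obtain ⟨hβL, hβne⟩ := hβ
    have hβσV : β ∈ σ (V' α) := (hLadsub α hα hβL).1
    rw [Set.mem_symmDiff]
    by_cases hβA : β ∈ σ A
    · have hd : decide (β ∈ σ A) = true := decide_eq_true hβA
      have hf : f α β ≠ true := fun h => hβne (by rw [hd, h])
      left
      exact ⟨⟨hβA, hβσV⟩, fun hβG => hf hβG.2⟩
    · have hd : decide (β ∈ σ A) = false := decide_eq_false hβA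
      have hf : f α β = true := by
        cases hfa : f α β
        · exact absurd (by rw [hd, hfa]) hβne
        · rfl
      right
      exact ⟨⟨hβL, hf⟩, fun hc => hβA hc.1⟩
  exact sm_mono herr hc3


section Main
variable {X : Type u} [LinearOrder X] {κ : Cardinal.{u}}
variable (hκ : ℵ₀ ≤ κ) {π ρ : Set X → Set X}
  (hπ : IsAutoRep κ π) (hcp : CardPres κ π) (hρ : ∀ A : Set X, Sim κ (π (ρ A)) A)
include hκ hπ hcp

include hρ in
lemma key_diff {A : Set X} (h : #(↥(ρ A \ A)) < κ) : #(↥(A \ π A)) < κ := by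
  have h1 : Sim κ (π (ρ A)) A := hρ A
  have hdec : ρ A = (ρ A ∩ A) ∪ (ρ A \ A) := (Set.inter_union_diff _ _).symm
  have h2 : Sim κ (π (ρ A)) (π (ρ A ∩ A) ∪ π (ρ A \ A)) := by
    conv_lhs => rw [hdec]
    exact hπ.2.1 _ _
  have h3 : #(↥(π (ρ A \ A))) < κ := pi_sm hκ hπ hcp h
  have h4 : #(↥(π (ρ A ∩ A) \ π A)) < κ := by
    apply pi_mono_sm hκ hπ hcp
    have : (ρ A ∩ A) \ A = ∅ := by
      ext x; simp only [Set.mem_diff, Set.mem_inter_iff, Set.mem_empty_iff_false, iff_false]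
      tauto
    rw [this]; exact sm_empty hκ
  have hsub : A \ π A ⊆ (symmDiff (π (ρ A)) A) ∪
      (symmDiff (π (ρ A)) (π (ρ A ∩ A) ∪ π (ρ A \ A))) ∪
      (π (ρ A ∩ A) \ π A) ∪ (π (ρ A \ A)) := by
    intro x hx
    by_cases hx1 : x ∈ π (ρ A)
    · by_cases hx2 : x ∈ π (ρ A ∩ A) ∪ π (ρ A \ A)
      · rcases hx2 with h | h
        · exact Or.inl (Or.inr ⟨h, hx.2⟩)
        · exact Or.inr h
      · refine Or.inl (Or.inl (Or.inr ?_))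
        rw [Set.mem_symmDiff]
        exact Or.inl ⟨hx1, hx2⟩
    · refine Or.inl (Or.inl (Or.inl ?_))
      rw [Set.mem_symmDiff]
      exact Or.inr ⟨hx.1, hx1⟩
  exact sm_mono hsub (sm_union hκ (sm_union hκ (sm_union hκ h1 h2) h4) h3)

include hρ in
lemma closure_isSuccLimit (α : X)
    (hCα : ∀ β < α,
      (#(↥(π (Set.Iio β) \ Set.Iio α)) < κ ∧ ¬ Sim κ (π (Set.Iio β)) (Set.Iio α)) ∧
      (#(↥(ρ (Set.Iio β) \ Set.Iio α)) < κ ∧ ¬ Sim κ (ρ (Set.Iio β)) (Set.Iio α)))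
    (hnf : ¬ Sim κ (π (Set.Iio α)) (Set.Iio α)) : Order.IsSuccLimit α := by
  constructor
  · intro hmin
    apply hnf
    have hempty : Set.Iio α = (∅ : Set X) := by
      ext x
      simp only [Set.mem_Iio, Set.mem_empty_iff_false, iff_false]
      exact fun hx => absurd (hmin hx.le) (not_le.mpr hx)
    rw [hempty]
    exact pi_empty hκ hπ hcp
  · intro γ hcov
    have hγα : γ < α := hcov.1
    apply hnf
    have hIio : Set.Iio α = Set.Iio γ ∪ {γ} := by
      ext x
      simp only [Set.mem_Iio, Set.mem_union, Set.mem_singleton_iff]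
      constructor
      · intro hx
        rcases lt_or_ge x γ with h | h
        · exact Or.inl h
        · rcases eq_or_lt_of_le h with h' | h'
          · exact Or.inr h'.symm
          · exact absurd hx (hcov.2 h')
      · rintro (h | rfl)
        · exact h.trans hγα
        · exact hγα
    have hsing : #(↥({γ} : Set X)) < κ := by
      rw [Cardinal.mk_singleton]
      exact Cardinal.one_lt_aleph0.trans_le hκ
    have hsim : Sim κ (Set.Iio α) (Set.Iio γ) := by
      refine sm_mono ?_ hsing
      intro x hx
      rw [Set.mem_symmDiff] at hx
      rw [hIio] at hx
      simp only [Set.mem_union, Set.mem_singleton_iff, Set.mem_Iio] at hx ⊢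
      tauto
    rw [sim_iff_diff hκ]
    constructor
    · -- π (Iio α) \ Iio α is small
      have h1 : Sim κ (π (Set.Iio α)) (π (Set.Iio γ)) := hπ.1 _ _ hsim
      have h2 : #(↥(π (Set.Iio γ) \ Set.Iio α)) < κ := ((hCα γ hγα).1).1
      refine sm_mono ?_ (sm_union hκ h1 h2)
      intro x hx
      rw [Set.mem_union, Set.mem_symmDiff]
      simp only [Set.mem_diff] at hx ⊢
      by_cases hxγ : x ∈ π (Set.Iio γ)
      · exact Or.inr ⟨hxγ, hx.2⟩
      · exact Or.inl (Or.inl ⟨hx.1, hxγ⟩)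
    · -- Iio α \ π (Iio α) is small
      apply key_diff hκ hπ hcp hρ
      have h1 : Sim κ (ρ (Set.Iio α)) (ρ (Set.Iio γ)) := rho_congr hκ hπ hρ hsim
      have h2 : #(↥(ρ (Set.Iio γ) \ Set.Iio α)) < κ := ((hCα γ hγα).2).1
      refine sm_mono ?_ (sm_union hκ h1 h2)
      intro x hx
      rw [Set.mem_union, Set.mem_symmDiff]
      simp only [Set.mem_diff] at hx ⊢
      by_cases hxγ : x ∈ ρ (Set.Iio γ)
      · exact Or.inr ⟨hxγ, hx.2⟩
      · exact Or.inl (Or.inl ⟨hx.1, hxγ⟩)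


end Main

end Stmt19Aux

/-- If `π` is a cardinality-preserving automorphism of `P(κ⁺)/I_κ` (κ regular) with
inverse selector `ρ`, `C` is the set of closure points of `π`, and `S` is the set of
non-fixed closure points, then `S` splits into two sets each of which carries a ladder
system satisfying 2-uniformization. -/
theorem stmt19 (κ : Cardinal.{u}) (hκ : ℵ₀ ≤ κ) (hreg : κ.IsRegular)
    (π : Set (SuccType κ) → Set (SuccType κ)) (hπ : IsAutoRep κ π)
    (hcp : CardPres κ π)
    (ρ : Set (SuccType κ) → Set (SuccType κ))
    (hρ : ∀ A : Set (SuccType κ), Sim κ (π (ρ A)) A)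
    (C : Set (SuccType κ))
    (hC : C = {β : SuccType κ | ∀ α < β,
      (#(↥(π (Set.Iio α) \ Set.Iio β)) < κ ∧ ¬ Sim κ (π (Set.Iio α)) (Set.Iio β)) ∧
      (#(↥(ρ (Set.Iio α) \ Set.Iio β)) < κ ∧ ¬ Sim κ (ρ (Set.Iio α)) (Set.Iio β))})
    (S : Set (SuccType κ))
    (hS : S = {α ∈ C | ¬ Sim κ (π (Set.Iio α)) (Set.Iio α)}) :
    ∃ S₀ S₁ : Set (SuccType κ), S = S₀ ∪ S₁ ∧
      (∀ α ∈ S₀, Order.IsSuccLimit α) ∧ (∀ α ∈ S₁, Order.IsSuccLimit α) ∧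
      (∃ Lad : SuccType κ → Set (SuccType κ),
        (∀ α ∈ S₀, IsLadderOn (Lad α) α) ∧ TwoUnif κ S₀ Lad) ∧
      (∃ Lad : SuccType κ → Set (SuccType κ),
        (∀ α ∈ S₁, IsLadderOn (Lad α) α) ∧ TwoUnif κ S₁ Lad) := by
  classical
  have hP : Stmt19Aux.SimPair κ π ρ := Stmt19Aux.pair_pi hκ hπ hcp hρ
  have hQ : Stmt19Aux.SimPair κ ρ π := Stmt19Aux.pair_rho hκ hπ hcp hρ
  have hmemS : ∀ a, a ∈ S →
      ((∀ β < a,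
        (#(↥(π (Set.Iio β) \ Set.Iio a)) < κ ∧ ¬ Sim κ (π (Set.Iio β)) (Set.Iio a)) ∧
        (#(↥(ρ (Set.Iio β) \ Set.Iio a)) < κ ∧ ¬ Sim κ (ρ (Set.Iio β)) (Set.Iio a))) ∧
       ¬ Sim κ (π (Set.Iio a)) (Set.Iio a)) := by
    intro a ha
    rw [hS] at ha
    refine ⟨?_, ha.2⟩
    have := ha.1
    rw [hC] at this
    exact this
  set S₀ : Set (SuccType κ) :=
    {α | α ∈ S ∧ ¬ #(↥(π (Set.Iio α) \ Set.Iio α)) < κ} with hS₀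
  set S₁ : Set (SuccType κ) :=
    {α | α ∈ S ∧ #(↥(π (Set.Iio α) \ Set.Iio α)) < κ} with hS₁
  have hlim : ∀ α ∈ S, Order.IsSuccLimit α := by
    intro α hα
    exact Stmt19Aux.closure_isSuccLimit hκ hπ hcp hρ α (hmemS α hα).1 (hmemS α hα).2
  refine ⟨S₀, S₁, ?_, fun α hα => hlim α hα.1, fun α hα => hlim α hα.1, ?_, ?_⟩
  · ext a
    simp only [hS₀, hS₁, Set.mem_union, Set.mem_setOf_eq]
    constructor
    · intro ha
      by_cases h : #(↥(π (Set.Iio a) \ Set.Iio a)) < κ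
      · exact Or.inr ⟨ha, h⟩
      · exact Or.inl ⟨ha, h⟩
    · rintro (h | h) <;> exact h.1
  · -- S₀ : the side where π (Iio α) \ Iio α is large; σ = ρ, τ = π
    exact Stmt19Aux.side_lemma hκ ρ π hQ hP S₀
      (fun α hα β hβ => (((hmemS α hα.1).1 β hβ).2).1)
      (fun α hα β hβ => (((hmemS α hα.1).1 β hβ).1).1)
      (fun α hα => hα.2)
      (fun α hα => hlim α hα.1)
  · -- S₁ : the side where ρ (Iio α) \ Iio α is large; σ = π, τ = ρ
    refine Stmt19Aux.side_lemma hκ π ρ hP hQ S₁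
      (fun α hα β hβ => (((hmemS α hα.1).1 β hβ).1).1)
      (fun α hα β hβ => (((hmemS α hα.1).1 β hβ).2).1)
      ?_
      (fun α hα => hlim α hα.1)
    intro α hα hcon
    have hsm : #(↥(Set.Iio α \ π (Set.Iio α))) < κ :=
      Stmt19Aux.key_diff hκ hπ hcp hρ hcon
    exact (hmemS α hα.1).2 ((Stmt19Aux.sim_iff_diff hκ).mpr ⟨hα.2, hsm⟩)
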